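/- arXiv:1703.09088 — 2 statements merged into one kernel-verified Lean document; each statement's English description precedes it below -/
import Mathlib

section
/- Let L/K be a finite Galois extension of number fields with Galois group G, let p be an odd prime, and let k be any integer. Then the ℤ_p[G]-module H_k^+(L) ⊗_ℤ ℤ_p is projective. -/
open scoped TensorProduct

/-- For a number field `L` and `k : ℤ`, the group `H_k^+(L)`: integer-valued functions `f` on
the set of embeddings `σ : L → ℂ` satisfying `f(conj ∘ σ) = (-1)^k · f(σ)`, viewed as a
`ℤ`-submodule of the functions `(L →+* ℂ) → ℤ`. -/
def Hplus (L : Type*) [Field L] (k : ℤ) : Submodule ℤ ((L →+* ℂ) → ℤ) where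
  carrier := {f | ∀ σ : L →+* ℂ, f ((starRingEnd ℂ).comp σ) = (((-1 : ℤˣ) ^ k : ℤˣ) : ℤ) * f σ}
  add_mem' := by
    intro a b ha hb σ
    simp only [Pi.add_apply, ha σ, hb σ]
    ring
  zero_mem' := by intro σ; simp
  smul_mem' := by
    intro c f hf σ
    simp only [Pi.smul_apply, smul_eq_mul, hf σ]
    ring

/-- The `ℤ`-linear action of the Galois group `G = Gal(L/K)` on `H_k^+(L)`, given by
`(g • f)(σ) = f(σ ∘ g)`. -/
def galAct (K L : Type*) [Field K] [Field L] [Algebra K L] (k : ℤ) :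
    (L ≃ₐ[K] L) →* (↥(Hplus L k) →ₗ[ℤ] ↥(Hplus L k)) where
  toFun g :=
    { toFun := fun f =>
        ⟨fun σ => (f : (L →+* ℂ) → ℤ) (σ.comp (g : L →+* L)), by
          intro σ
          have h := f.2 (σ.comp (g : L →+* L))
          rw [← RingHom.comp_assoc] at h
          exact h⟩
      map_add' := by intro f f'; ext σ; rfl
      map_smul' := by intro c f; ext σ; rfl }
  map_one' := by
    ext f σ
    congr 1
  map_mul' g h := by
    ext f σ
    congr 1

/-- The representation of `G = Gal(L/K)` on `ℤ_p ⊗_ℤ H_k^+(L)` obtained by extending the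
action `(g • f)(σ) = f(σ ∘ g)` on `H_k^+(L)` `ℤ_p`-linearly. -/
noncomputable def galRep (p : ℕ) [Fact p.Prime] (K L : Type*) [Field K] [Field L]
    [Algebra K L] (k : ℤ) :
    Representation ℤ_[p] (L ≃ₐ[K] L) (ℤ_[p] ⊗[ℤ] ↥(Hplus L k)) where
  toFun g := (galAct K L k g).baseChange ℤ_[p]
  map_one' := by
    show LinearMap.baseChange ℤ_[p] ((galAct K L k) 1) = 1
    rw [map_one, Module.End.one_eq_id, LinearMap.baseChange_id, Module.End.one_eq_id]
  map_mul' g h := by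
    show LinearMap.baseChange ℤ_[p] ((galAct K L k) (g * h)) = _
    rw [map_mul, Module.End.mul_eq_comp, LinearMap.baseChange_comp, ← Module.End.mul_eq_comp]


open scoped Classical

namespace HplusAux

section General

variable {R G V W : Type*} [CommSemiring R] [Monoid G]
  [AddCommMonoid V] [Module R V] [AddCommMonoid W] [Module R W]

noncomputable instance asModuleTower (ρ : Representation R G V) :
    IsScalarTower R (MonoidAlgebra R G) ρ.asModule :=
  ⟨fun r a x => by
    show ρ.asAlgebraHom (r • a) x = r • ρ.asAlgebraHom a x
    rw [map_smul]
    rfl⟩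

/-- An equivariant linear map induces a `MonoidAlgebra`-linear map between `asModule`s. -/
noncomputable def asModuleHom (ρ : Representation R G V) (τ : Representation R G W)
    (f : V →ₗ[R] W) (h : ∀ g : G, f ∘ₗ ρ g = τ g ∘ₗ f) :
    ρ.asModule →ₗ[MonoidAlgebra R G] τ.asModule where
  toFun := f
  map_add' := map_add f
  map_smul' r x := by
    show f (ρ.asAlgebraHom r x) = τ.asAlgebraHom r (f x)
    induction r using MonoidAlgebra.induction_linear with
    | zero => simp; exact map_zero f
    | add a b ha hb => simp [map_add, ha, hb]; exact (map_add f _ _).trans (congrArg₂ (· + ·) ha hb)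
    | single g c =>
      rw [Representation.asAlgebraHom_single, Representation.asAlgebraHom_single]
      show f (c • ρ g x) = c • τ g (f x)
      rw [map_smul]
      exact congrArg (c • ·) (LinearMap.congr_fun (h g) x)

@[simp] lemma asModuleHom_apply (ρ : Representation R G V) (τ : Representation R G W)
    (f : V →ₗ[R] W) (h : ∀ g : G, f ∘ₗ ρ g = τ g ∘ₗ f) (x : ρ.asModule) :
    asModuleHom ρ τ f h x = f x := rfl

end General

section Main

variable (p : ℕ) [Fact p.Prime] (K L : Type*) [Field K] [Field L] [Algebra K L] (k : ℤ)

/-- coercion compatibilities -/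
lemma comp_coe_one (σ : L →+* ℂ) : σ.comp ((1 : L ≃ₐ[K] L) : L →+* L) = σ :=
  RingHom.ext fun _ => rfl

lemma comp_coe_mul (σ : L →+* ℂ) (g h : L ≃ₐ[K] L) :
    σ.comp ((g * h : L ≃ₐ[K] L) : L →+* L) = (σ.comp (g : L →+* L)).comp (h : L →+* L) :=
  RingHom.ext fun _ => rfl

lemma comp_cancel (σ : L →+* ℂ) (g : L ≃ₐ[K] L) :
    (σ.comp (g : L →+* L)).comp ((g⁻¹ : L ≃ₐ[K] L) : L →+* L) = σ := by
  rw [← comp_coe_mul, mul_inv_cancel, comp_coe_one]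

lemma comp_eq_iff (σ τ : L →+* ℂ) (g : L ≃ₐ[K] L) :
    τ.comp (g : L →+* L) = σ ↔ τ = σ.comp ((g⁻¹ : L ≃ₐ[K] L) : L →+* L) := by
  constructor
  · rintro rfl; rw [comp_cancel]
  · rintro rfl; rw [← comp_coe_mul, inv_mul_cancel, comp_coe_one]

/-- The permutation representation of the Galois group on `(L →+* ℂ) → R`. -/
def funcRep (R : Type*) [CommRing R] :
    Representation R (L ≃ₐ[K] L) ((L →+* ℂ) → R) where
  toFun g :=
    { toFun := fun f σ => f (σ.comp (g : L →+* L))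
      map_add' := fun _ _ => rfl
      map_smul' := fun _ _ => rfl }
  map_one' := by
    refine LinearMap.ext fun f => funext fun σ => ?_
    show f (σ.comp _) = f σ
    rw [comp_coe_one]
  map_mul' g h := by
    refine LinearMap.ext fun f => funext fun σ => ?_
    show f (σ.comp _) = f ((σ.comp _).comp _)
    rw [comp_coe_mul]

lemma funcRep_apply (R : Type*) [CommRing R] (g : L ≃ₐ[K] L) (f : (L →+* ℂ) → R)
    (σ : L →+* ℂ) : funcRep K L R g f σ = f (σ.comp (g : L →+* L)) := rfl

/-- The sign `(-1)^k`. -/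
def sgn : ℤ := (((-1 : ℤˣ) ^ k : ℤˣ) : ℤ)

lemma sgn_mul_self : sgn k * sgn k = 1 := by
  rw [sgn, ← Units.val_mul, Int.units_mul_self, Units.val_one]

lemma conj_conj_comp (σ : L →+* ℂ) :
    (starRingEnd ℂ).comp ((starRingEnd ℂ).comp σ) = σ :=
  RingHom.ext fun x => star_star (σ x)

/-- The norm-type operator `f ↦ f + (-1)^k (f ∘ c)`, mapping into `Hplus`. -/
def Eop : ((L →+* ℂ) → ℤ) →ₗ[ℤ] ↥(Hplus L k) where
  toFun f := ⟨fun σ => f σ + sgn k * f ((starRingEnd ℂ).comp σ), by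
    intro σ
    show f ((starRingEnd ℂ).comp σ) +
        sgn k * f ((starRingEnd ℂ).comp ((starRingEnd ℂ).comp σ)) =
      sgn k * (f σ + sgn k * f ((starRingEnd ℂ).comp σ))
    rw [conj_conj_comp]
    linear_combination (-(f ((starRingEnd ℂ).comp σ))) * sgn_mul_self k⟩
  map_add' f g := by
    ext σ
    show (f + g) σ + sgn k * (f + g) _ = _
    simp only [Pi.add_apply, AddMemClass.coe_add]
    show _ = (f σ + sgn k * f ((starRingEnd ℂ).comp σ)) + (g σ + sgn k * g ((starRingEnd ℂ).comp σ))
    ring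
  map_smul' c f := by
    ext σ
    show (c • f) σ + sgn k * (c • f) _ = _
    simp only [Pi.smul_apply, smul_eq_mul, SetLike.val_smul]
    show _ = c • (f σ + sgn k * f ((starRingEnd ℂ).comp σ))
    simp only [smul_eq_mul]
    ring

lemma Eop_comp_subtype :
    Eop L k ∘ₗ (Hplus L k).subtype = (2 : ℤ) • LinearMap.id := by
  refine LinearMap.ext fun f => ?_
  ext σ
  show (f : (L →+* ℂ) → ℤ) σ + sgn k * (f : (L →+* ℂ) → ℤ) ((starRingEnd ℂ).comp σ) = _
  have h2 : (f : (L →+* ℂ) → ℤ) ((starRingEnd ℂ).comp σ) = sgn k * (f : (L →+* ℂ) → ℤ) σ :=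
    f.2 σ
  show _ = ((2 : ℤ) • (f : (L →+* ℂ) → ℤ)) σ
  simp only [Pi.smul_apply, smul_eq_mul]
  linear_combination (sgn k) * h2 + ((f : (L →+* ℂ) → ℤ) σ) * sgn_mul_self k

lemma subtype_equivariant (g : L ≃ₐ[K] L) :
    (Hplus L k).subtype ∘ₗ galAct K L k g = funcRep K L ℤ g ∘ₗ (Hplus L k).subtype :=
  rfl

lemma Eop_equivariant (g : L ≃ₐ[K] L) :
    Eop L k ∘ₗ funcRep K L ℤ g = galAct K L k g ∘ₗ Eop L k := by
  refine LinearMap.ext fun f => ?_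
  ext σ
  show funcRep K L ℤ g f σ + sgn k * funcRep K L ℤ g f ((starRingEnd ℂ).comp σ) =
    f (σ.comp (g : L →+* L)) + sgn k * f ((starRingEnd ℂ).comp (σ.comp (g : L →+* L)))
  rw [funcRep_apply, funcRep_apply, RingHom.comp_assoc]

set_option synthInstance.maxHeartbeats 1000000 in
/-- Base-changed permutation representation on `ℤ_[p] ⊗ ((L →+* ℂ) → ℤ)`. -/
noncomputable def tensRep :
    Representation ℤ_[p] (L ≃ₐ[K] L) (ℤ_[p] ⊗[ℤ] ((L →+* ℂ) → ℤ)) where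
  toFun g := (funcRep K L ℤ g).baseChange ℤ_[p]
  map_one' := by
    show LinearMap.baseChange ℤ_[p] ((funcRep K L ℤ) 1) = 1
    rw [(funcRep K L ℤ).map_one, Module.End.one_eq_id, LinearMap.baseChange_id, Module.End.one_eq_id]
  map_mul' g h := by
    show LinearMap.baseChange ℤ_[p] ((funcRep K L ℤ) (g * h)) = _
    rw [(funcRep K L ℤ).map_mul, Module.End.mul_eq_comp, LinearMap.baseChange_comp, ← Module.End.mul_eq_comp]

/-- Coefficient extension `ℤ → ℤ_[p]` on functions. -/
noncomputable def castMap : ((L →+* ℂ) → ℤ) →ₗ[ℤ] ((L →+* ℂ) → ℤ_[p]) where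
  toFun f σ := (f σ : ℤ_[p])
  map_add' f g := by funext σ; simp [Pi.add_apply]
  map_smul' c f := by
    funext σ
    show ((c * f σ : ℤ) : ℤ_[p]) = (c • fun τ => ((f τ : ℤ_[p]))) σ
    simp only [Pi.smul_apply, zsmul_eq_mul]
    push_cast
    ring

/-- The canonical map `ℤ_[p] ⊗ ((L →+* ℂ) → ℤ) → ((L →+* ℂ) → ℤ_[p])`. -/
noncomputable def canMap : (ℤ_[p] ⊗[ℤ] ((L →+* ℂ) → ℤ)) →ₗ[ℤ_[p]] ((L →+* ℂ) → ℤ_[p]) :=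
  (castMap p L).liftBaseChange ℤ_[p]

lemma canMap_bijective [NumberField L] : Function.Bijective (canMap p L) := by
  classical
  let B1 : Module.Basis (L →+* ℂ) ℤ_[p] (ℤ_[p] ⊗[ℤ] ((L →+* ℂ) → ℤ)) :=
    (Pi.basisFun ℤ (L →+* ℂ)).baseChange ℤ_[p]
  let B2 : Module.Basis (L →+* ℂ) ℤ_[p] ((L →+* ℂ) → ℤ_[p]) := Pi.basisFun ℤ_[p] (L →+* ℂ)
  have heq : canMap p L = ↑(B1.equiv B2 (Equiv.refl _)) := by
    refine B1.ext fun σ => ?_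
    show canMap p L (B1 σ) = B1.equiv B2 (Equiv.refl _) (B1 σ)
    rw [Module.Basis.equiv_apply, Equiv.refl_apply]
    show canMap p L (B1 σ) = B2 σ
    have hb : B1 σ = 1 ⊗ₜ[ℤ] (Pi.basisFun ℤ (L →+* ℂ)) σ := Module.Basis.baseChange_apply _ _ _
    rw [hb]
    show (castMap p L).liftBaseChange ℤ_[p] _ = _
    rw [LinearMap.liftBaseChange_tmul, one_smul]
    funext τ
    show ((Pi.basisFun ℤ (L →+* ℂ) σ τ : ℤ) : ℤ_[p]) = Pi.basisFun ℤ_[p] (L →+* ℂ) σ τ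
    rw [Pi.basisFun_apply, Pi.basisFun_apply]
    by_cases h : τ = σ
    · subst h; rw [Pi.single_eq_same, Pi.single_eq_same]; norm_num
    · rw [Pi.single_eq_of_ne h, Pi.single_eq_of_ne h]; norm_num
  rw [heq]
  exact (B1.equiv B2 (Equiv.refl _)).bijective

set_option synthInstance.maxHeartbeats 1000000 in
lemma canMap_equivariant (g : L ≃ₐ[K] L) :
    canMap p L ∘ₗ tensRep p K L g = funcRep K L ℤ_[p] g ∘ₗ canMap p L := by
  refine LinearMap.ext fun x => ?_
  induction x using TensorProduct.induction_on with
  | zero => simp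
  | tmul a f =>
    show canMap p L ((funcRep K L ℤ g).baseChange ℤ_[p] (a ⊗ₜ f)) =
      funcRep K L ℤ_[p] g (canMap p L (a ⊗ₜ f))
    rw [LinearMap.baseChange_tmul]
    simp only [canMap, LinearMap.liftBaseChange_tmul, map_smul]
    rfl
  | add x y hx hy =>
    simp only [map_add, LinearMap.comp_apply] at hx hy ⊢
    rw [hx, hy]

/-- The orbit equivalence on embeddings under precomposition with the Galois group. -/
def embSetoid : Setoid (L →+* ℂ) where
  r σ τ := ∃ g : L ≃ₐ[K] L, τ = σ.comp (g : L →+* L)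
  iseqv := by
    constructor
    · exact fun σ => ⟨1, (comp_coe_one K L σ).symm⟩
    · rintro σ τ ⟨g, rfl⟩
      exact ⟨g⁻¹, (comp_cancel K L σ g).symm⟩
    · rintro σ τ υ ⟨g, rfl⟩ ⟨h, rfl⟩
      exact ⟨g * h, (comp_coe_mul K L σ g h).symm⟩

/-- Map from (orbit, group element) pairs to embeddings. -/
noncomputable def orbMap (x : Quotient (embSetoid K L) × (L ≃ₐ[K] L)) : L →+* ℂ :=
  x.1.out.comp ((x.2⁻¹ : L ≃ₐ[K] L) : L →+* L)

lemma orbMap_bijective : Function.Bijective (orbMap K L) := by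
  constructor
  · rintro ⟨q, g⟩ ⟨q', g'⟩ h
    have hq : q = q' := by
      have h' : q.out.comp ((g⁻¹ : L ≃ₐ[K] L) : L →+* L) =
          q'.out.comp ((g'⁻¹ : L ≃ₐ[K] L) : L →+* L) := h
      have : (embSetoid K L).r q.out q'.out := by
        refine ⟨g⁻¹ * g'⁻¹⁻¹, ?_⟩
        rw [comp_coe_mul, h']
        exact (comp_cancel K L q'.out g'⁻¹).symm
      have h2 : (⟦q.out⟧ : Quotient (embSetoid K L)) = ⟦q'.out⟧ := Quotient.sound this
      rwa [Quotient.out_eq, Quotient.out_eq] at h2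
    subst hq
    have hinj : Function.Injective (q.out : L → ℂ) := q.out.injective
    have : g⁻¹ = g'⁻¹ := by
      apply AlgEquiv.ext
      intro x
      apply hinj
      exact congrArg (fun (ψ : L →+* ℂ) => ψ x) h
    rw [Prod.mk.injEq]
    exact ⟨rfl, inv_injective this⟩
  · intro σ
    have : (embSetoid K L).r (⟦σ⟧ : Quotient (embSetoid K L)).out σ :=
      Quotient.exact (Quotient.out_eq _)
    obtain ⟨g, hg⟩ := this
    exact ⟨(⟦σ⟧, g⁻¹), by rw [orbMap, inv_inv, ← hg]⟩

lemma funcRep_single (g : L ≃ₐ[K] L) (σ : L →+* ℂ) :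
    funcRep K L ℤ_[p] g (Pi.single σ 1) =
      Pi.single (σ.comp ((g⁻¹ : L ≃ₐ[K] L) : L →+* L)) (1 : ℤ_[p]) := by
  funext τ
  rw [funcRep_apply]
  by_cases h : τ.comp (g : L →+* L) = σ
  · rw [h, Pi.single_eq_same, ((comp_eq_iff K L σ τ g).mp h : τ = _), Pi.single_eq_same]
  · rw [Pi.single_eq_of_ne h, Pi.single_eq_of_ne]
    intro hc
    exact h ((comp_eq_iff K L σ τ g).mpr hc)

/-- The `MonoidAlgebra`-linear map from the free module on the orbit set. -/
noncomputable def bmap :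
    (Quotient (embSetoid K L) →₀ MonoidAlgebra ℤ_[p] (L ≃ₐ[K] L)) →ₗ[MonoidAlgebra ℤ_[p] (L ≃ₐ[K] L)]
      (funcRep K L ℤ_[p]).asModule :=
  Finsupp.linearCombination _ (fun q : Quotient (embSetoid K L) =>
    (Pi.single q.out 1 : (L →+* ℂ) → ℤ_[p]))

lemma bmap_bijective [NumberField L] : Function.Bijective (bmap p K L) := by
  classical
  let B1 : Module.Basis ((_ : Quotient (embSetoid K L)) × (L ≃ₐ[K] L)) ℤ_[p]
      (Quotient (embSetoid K L) →₀ MonoidAlgebra ℤ_[p] (L ≃ₐ[K] L)) :=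
    Finsupp.basis (fun _ => (MonoidAlgebra.basis _ _ :
      Module.Basis (L ≃ₐ[K] L) ℤ_[p] (MonoidAlgebra ℤ_[p] (L ≃ₐ[K] L))))
  let B2 : Module.Basis (L →+* ℂ) ℤ_[p] ((funcRep K L ℤ_[p]).asModule) := Pi.basisFun ℤ_[p] (L →+* ℂ)
  let e : ((_ : Quotient (embSetoid K L)) × (L ≃ₐ[K] L)) ≃ (L →+* ℂ) :=
    (Equiv.sigmaEquivProd _ _).trans (Equiv.ofBijective _ (orbMap_bijective K L))
  have heq : LinearMap.restrictScalars ℤ_[p] (bmap p K L) = ↑(B1.equiv B2 e) := by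
    refine B1.ext fun qg => ?_
    obtain ⟨q, g⟩ := qg
    show bmap p K L (B1 ⟨q, g⟩) = (B1.equiv B2 e) (B1 ⟨q, g⟩)
    rw [Module.Basis.equiv_apply]
    have hB1 : B1 ⟨q, g⟩ = Finsupp.single q (MonoidAlgebra.single g (1 : ℤ_[p])) := by
      simp only [B1, Finsupp.coe_basis]
      congr 1
    rw [hB1, bmap]
    erw [Finsupp.linearCombination_single]
    show (funcRep K L ℤ_[p]).asAlgebraHom (MonoidAlgebra.single g 1) (Pi.single q.out 1) = _
    rw [Representation.asAlgebraHom_single_one, funcRep_single]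
    have hB2 : B2 (e ⟨q, g⟩) = Pi.single (e ⟨q, g⟩) (1 : ℤ_[p]) := Pi.basisFun_apply _ _ _
    rw [hB2]
    rfl
  have hb : Function.Bijective (LinearMap.restrictScalars ℤ_[p] (bmap p K L)) := by
    rw [heq]; exact (B1.equiv B2 e).bijective
  exact hb

lemma isUnit_two (hp : Odd p) : IsUnit (2 : ℤ_[p]) := by
  rw [PadicInt.isUnit_iff]
  refine le_antisymm (PadicInt.norm_le_one _) ?_
  by_contra hlt
  push_neg at hlt
  have h2 : ((2 : ℤ) : ℤ_[p]) = (2 : ℤ_[p]) := by norm_num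
  rw [← h2] at hlt
  have := (PadicInt.norm_int_lt_one_iff_dvd (p := p) 2).mp hlt
  have hp2 : p ∣ 2 := by exact_mod_cast this
  have := Nat.le_of_dvd (by norm_num) hp2
  have hge := (Fact.out : p.Prime).two_le
  have hpe : p = 2 := le_antisymm ‹p ≤ 2› hge
  rw [hpe] at hp
  exact (Nat.not_odd_iff_even.mpr (by norm_num)) hp

lemma baseChange_subtype_equivariant (g : L ≃ₐ[K] L) :
    ((Hplus L k).subtype.baseChange ℤ_[p]) ∘ₗ galRep p K L k g =
      tensRep p K L g ∘ₗ ((Hplus L k).subtype.baseChange ℤ_[p]) := by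
  show ((Hplus L k).subtype.baseChange ℤ_[p]) ∘ₗ (galAct K L k g).baseChange ℤ_[p] =
    (funcRep K L ℤ g).baseChange ℤ_[p] ∘ₗ ((Hplus L k).subtype.baseChange ℤ_[p])
  rw [← LinearMap.baseChange_comp, ← LinearMap.baseChange_comp, subtype_equivariant]

lemma baseChange_Eop_equivariant (g : L ≃ₐ[K] L) :
    ((Eop L k).baseChange ℤ_[p]) ∘ₗ tensRep p K L g =
      galRep p K L k g ∘ₗ ((Eop L k).baseChange ℤ_[p]) := by
  show ((Eop L k).baseChange ℤ_[p]) ∘ₗ (funcRep K L ℤ g).baseChange ℤ_[p] =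
    (galAct K L k g).baseChange ℤ_[p] ∘ₗ ((Eop L k).baseChange ℤ_[p])
  rw [← LinearMap.baseChange_comp, ← LinearMap.baseChange_comp, Eop_equivariant]

/-- The inclusion as a module map over the group ring. -/
noncomputable def inclA :
    (galRep p K L k).asModule →ₗ[MonoidAlgebra ℤ_[p] (L ≃ₐ[K] L)] (tensRep p K L).asModule :=
  asModuleHom _ _ ((Hplus L k).subtype.baseChange ℤ_[p]) (baseChange_subtype_equivariant p K L k)

/-- The norm operator as a module map over the group ring. -/
noncomputable def EA :
    (tensRep p K L).asModule →ₗ[MonoidAlgebra ℤ_[p] (L ≃ₐ[K] L)] (galRep p K L k).asModule :=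
  asModuleHom _ _ ((Eop L k).baseChange ℤ_[p]) (baseChange_Eop_equivariant p K L k)

/-- The canonical comparison map as a module map over the group ring. -/
noncomputable def canA :
    (tensRep p K L).asModule →ₗ[MonoidAlgebra ℤ_[p] (L ≃ₐ[K] L)]
      (funcRep K L ℤ_[p]).asModule :=
  asModuleHom _ _ (canMap p L) (canMap_equivariant p K L)

/-- Multiplication by the inverse of 2. -/
noncomputable def halfA (hp : Odd p) :
    (galRep p K L k).asModule →ₗ[MonoidAlgebra ℤ_[p] (L ≃ₐ[K] L)] (galRep p K L k).asModule :=
  asModuleHom _ _ (((((isUnit_two p hp).unit⁻¹ : ℤ_[p]ˣ) : ℤ_[p])) • LinearMap.id) (fun g => by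
    refine LinearMap.ext fun x => ?_
    simp only [LinearMap.comp_apply, LinearMap.smul_apply, LinearMap.id_apply, map_smul])

end Main

end HplusAux

/-- Let `L/K` be a finite Galois extension of number fields with Galois group `G`, let `p` be
an odd prime and `k` any integer. Then the `ℤ_p[G]`-module `H_k^+(L) ⊗_ℤ ℤ_p` is projective. -/
theorem hplus_tensor_padic_projective (p : ℕ) [Fact p.Prime] (hp : Odd p)
    (K L : Type*) [Field K] [Field L] [NumberField K] [NumberField L] [Algebra K L]
    [IsGalois K L] (k : ℤ) :
    Module.Projective (MonoidAlgebra ℤ_[p] (L ≃ₐ[K] L)) (galRep p K L k).asModule := by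
  classical
  haveI hproj : Module.Projective (MonoidAlgebra ℤ_[p] (L ≃ₐ[K] L))
      ((HplusAux.funcRep K L ℤ_[p]).asModule) :=
    Module.Projective.of_equiv
      (LinearEquiv.ofBijective (HplusAux.bmap p K L) (HplusAux.bmap_bijective p K L))
  let canE : (HplusAux.tensRep p K L).asModule ≃ₗ[MonoidAlgebra ℤ_[p] (L ≃ₐ[K] L)]
      (HplusAux.funcRep K L ℤ_[p]).asModule :=
    LinearEquiv.ofBijective (HplusAux.canA p K L) (HplusAux.canMap_bijective p L)
  let ι := canE.toLinearMap ∘ₗ HplusAux.inclA p K L k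
  let s := HplusAux.halfA p K L k hp ∘ₗ HplusAux.EA p K L k ∘ₗ canE.symm.toLinearMap
  refine Module.Projective.of_split ι s ?_
  refine LinearMap.ext fun x => ?_
  have hcan : canE.symm (canE (HplusAux.inclA p K L k x)) = HplusAux.inclA p K L k x :=
    canE.symm_apply_apply _
  have hcomp : ((HplusAux.Eop L k).baseChange ℤ_[p]) ∘ₗ ((Hplus L k).subtype.baseChange ℤ_[p]) =
      (2 : ℤ) • LinearMap.id := by
    rw [← LinearMap.baseChange_comp, HplusAux.Eop_comp_subtype, LinearMap.baseChange_smul,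
      LinearMap.baseChange_id]
  have hkey : (HplusAux.Eop L k).baseChange ℤ_[p] ((Hplus L k).subtype.baseChange ℤ_[p] x) =
      (2 : ℤ) • x := LinearMap.congr_fun hcomp x
  show HplusAux.halfA p K L k hp (HplusAux.EA p K L k (canE.symm (canE
    (HplusAux.inclA p K L k x)))) = x
  rw [hcan]
  simp only [HplusAux.halfA, HplusAux.EA, HplusAux.inclA, HplusAux.asModuleHom_apply]
  erw [hkey]
  erw [LinearMap.smul_apply, LinearMap.id_apply]
  rw [← Int.cast_smul_eq_zsmul ℤ_[p] 2 x]
  erw [smul_smul]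
  have h2 : ((2 : ℤ) : ℤ_[p]) = (2 : ℤ_[p]) := by norm_num
  erw [h2, IsUnit.val_inv_mul, one_smul]
end

section
/- Let r ≥ 3 be an odd integer. Then there exist a complex number ℓ and a nonzero rational number q such that (s − (1−r)) · Γ_ℝ(s) tends to ℓ as s tends to 1−r within the punctured neighborhood of 1−r in ℂ, and Γ_ℝ(r) = q · π^{1−r} · ℓ. In other words, the ratio of Γ_ℝ(r) to the leading coefficient of Γ_ℝ at its simple pole s = 1−r lies in π^{1−r} · ℚ^×. -/
open Filter Topology Complex Real

lemma gamma_prod_aux (n : ℕ) (s : ℂ) (h : ∀ k : ℕ, k < n → s + k ≠ 0) :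
    Complex.Gamma (s + n) = Complex.Gamma s * ∏ k ∈ Finset.range n, (s + k) := by
  induction n with
  | zero => simp
  | succ n ih =>
    have h1 : s + (n : ℂ) ≠ 0 := h n (Nat.lt_succ_self n)
    have hc : (s + ((n+1 : ℕ) : ℂ)) = (s + n) + 1 := by push_cast; ring
    rw [hc, Complex.Gamma_add_one _ h1, ih (fun k hk => h k (hk.trans (Nat.lt_succ_self n))),
      Finset.prod_range_succ]
    ring

lemma prod_neg_nat_aux (n : ℕ) :
    ∏ k ∈ Finset.range n, ((-(n:ℂ)) + k) = (-1)^n * n.factorial := by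
  rw [← Finset.prod_range_reflect]
  have h : ∀ j ∈ Finset.range n, (-(n:ℂ)) + (n - 1 - j : ℕ) = (-1) * ((j:ℂ)+1) := by
    intro j hj
    rw [Finset.mem_range] at hj
    have : (n - 1 - j : ℕ) = n - (j+1) := by omega
    rw [this, Nat.cast_sub (by omega)]
    push_cast
    ring
  rw [Finset.prod_congr rfl h, Finset.prod_mul_distrib, Finset.prod_const, Finset.card_range]
  congr 1
  exact_mod_cast congrArg (Nat.cast : ℕ → ℂ) (Finset.prod_range_add_one_eq_factorial n)

/-- Residue of Gamma at `-n`. -/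
lemma gamma_residue_aux (n : ℕ) :
    Tendsto (fun s : ℂ => (s + n) * Complex.Gamma s) (𝓝[≠] (-(n:ℂ)))
      (𝓝 ((-1)^n / n.factorial)) := by
  have hprodne : ∏ k ∈ Finset.range n, ((-(n:ℂ)) + k) ≠ 0 := by
    rw [prod_neg_nat_aux]
    exact mul_ne_zero (pow_ne_zero _ (by norm_num)) (Nat.cast_ne_zero.mpr n.factorial_ne_zero)
  have hcont : Tendsto (fun s : ℂ => Complex.Gamma (s + (n+1)) / ∏ k ∈ Finset.range n, (s + k))
      (𝓝 (-(n:ℂ))) (𝓝 ((-1)^n / n.factorial)) := by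
    have key : (-(n:ℂ) + (n+1)) = 1 := by ring
    have h1 : ContinuousAt (fun s : ℂ => Complex.Gamma (s + (n+1))) (-(n:ℂ)) := by
      refine ((Complex.differentiableAt_Gamma _ (fun m => ?_)).continuousAt).comp
        ((continuous_id.add continuous_const).continuousAt)
      show -(n:ℂ) + (n+1) ≠ -m
      rw [key]
      intro hm
      have : (1 : ℝ) = -m := by exact_mod_cast hm
      nlinarith [Nat.cast_nonneg (α := ℝ) m]
    have h2 : ContinuousAt (fun s : ℂ => ∏ k ∈ Finset.range n, (s + k)) (-(n:ℂ)) :=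
      (continuous_finset_prod _ fun k _ => continuous_id.add continuous_const).continuousAt
    have := (h1.div h2 hprodne).tendsto
    convert this using 2
    simp only [Pi.div_apply]
    show (-1:ℂ) ^ n / n.factorial = Complex.Gamma (-(n:ℂ) + (n+1)) / ∏ k ∈ Finset.range n, (-(n:ℂ) + k)
    rw [key, Complex.Gamma_one, prod_neg_nat_aux, one_div, mul_inv, ← inv_pow, inv_neg, inv_one,
      div_eq_mul_inv]
  refine (hcont.mono_left nhdsWithin_le_nhds).congr' ?_
  have hU : {s : ℂ | ∀ k : ℕ, k < n → s + k ≠ 0} ∈ 𝓝 (-(n:ℂ)) := by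
    have : IsOpen {s : ℂ | ∀ k : ℕ, k < n → s + k ≠ 0} := by
      have : {s : ℂ | ∀ k : ℕ, k < n → s + k ≠ 0} =
          ⋂ k ∈ Finset.range n, {s : ℂ | s + k ≠ 0} := by
        ext s; simp [Finset.mem_range]
      rw [this]
      exact isOpen_biInter_finset fun k _ =>
        isOpen_compl_iff.mpr (isClosed_eq (continuous_id.add continuous_const) continuous_const)
    refine this.mem_nhds ?_
    intro k hk hc
    have hc' : (n : ℂ) = k := by linear_combination -hc
    have : n = k := by exact_mod_cast hc'
    omega
  filter_upwards [self_mem_nhdsWithin, nhdsWithin_le_nhds hU] with s hs hs'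
  have hsn : s + (n:ℂ) ≠ 0 := fun hc => hs (Set.mem_singleton_iff.mpr (by linear_combination hc))
  have hall : ∀ k : ℕ, k < n + 1 → s + k ≠ 0 := by
    intro k hk
    rcases Nat.lt_or_ge k n with h | h
    · exact hs' k h
    · have : k = n := by omega
      rw [this]; exact hsn
  have := gamma_prod_aux (n+1) s hall
  push_cast at this
  rw [this, Finset.prod_range_succ]
  have hprod : ∏ k ∈ Finset.range n, (s + k) ≠ 0 :=
    Finset.prod_ne_zero_iff.mpr fun k hk => hs' k (Finset.mem_range.mp hk)
  field_simp

lemma gammaR_residue_aux (m : ℕ) :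
    Tendsto (fun s : ℂ => (s + 2*m) * Complex.Gammaℝ s) (𝓝[≠] (-(2*(m:ℂ))))
      (𝓝 ((π:ℂ)^m * (2 * ((-1)^m / m.factorial)))) := by
  have hhalf : Tendsto (fun s : ℂ => s / 2) (𝓝[≠] (-(2*(m:ℂ)))) (𝓝[≠] (-(m:ℂ))) := by
    rw [tendsto_nhdsWithin_iff, (by ring_nf : 𝓝 (-(m:ℂ)) = 𝓝 (-(2*(m:ℂ)) / 2))]
    refine ⟨(tendsto_id.div_const _).mono_left nhdsWithin_le_nhds,
      eventually_of_mem self_mem_nhdsWithin fun x hx => ?_⟩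
    intro hc
    exact hx (Set.mem_singleton_iff.mpr (by rw [Set.mem_singleton_iff] at hc; linear_combination 2 * hc))
  have h : Tendsto (fun s : ℂ => (s/2 + m) * Complex.Gamma (s/2)) (𝓝[≠] (-(2*(m:ℂ))))
      (𝓝 ((-1)^m / m.factorial)) := (gamma_residue_aux m).comp hhalf
  have h' : Tendsto (fun s : ℂ => (π:ℂ) ^ (-s / 2)) (𝓝[≠] (-(2*(m:ℂ)))) (𝓝 ((π:ℂ)^m)) := by
    have : ContinuousAt (fun s : ℂ => (π:ℂ) ^ (-s / 2)) (-(2*(m:ℂ))) := by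
      exact ContinuousAt.comp (g := fun z : ℂ => (π:ℂ) ^ z)
        (continuousAt_const_cpow (Complex.ofReal_ne_zero.mpr Real.pi_ne_zero))
        (continuousAt_id.neg.div_const _)
    have hv : (π:ℂ) ^ (-(-(2*(m:ℂ))) / 2) = (π:ℂ)^m := by
      rw [show -(-(2*(m:ℂ))) / 2 = ((m:ℕ):ℂ) by ring, Complex.cpow_natCast]
    exact hv ▸ this.tendsto.mono_left nhdsWithin_le_nhds
  have := h'.mul (h.const_mul 2)
  rw [show (π:ℂ)^m * (2 * ((-1)^m / m.factorial)) = (π:ℂ)^m * (2 * ((-1:ℂ)^m / m.factorial)) by norm_num] at this ⊢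
  refine this.congr fun s => ?_
  rw [Complex.Gammaℝ]
  ring

lemma cpow_half_aux : ((π:ℝ):ℂ) ^ (1/2 : ℂ) = ((Real.sqrt π : ℝ) : ℂ) := by
  rw [Real.sqrt_eq_rpow, Complex.ofReal_cpow Real.pi_pos.le]
  norm_num

lemma gamma_half_aux (m : ℕ) :
    ∃ c : ℚ, c ≠ 0 ∧ Complex.Gamma ((m:ℂ) + 1/2) = (c:ℂ) * (Real.sqrt π : ℂ) := by
  induction m with
  | zero =>
    refine ⟨1, one_ne_zero, ?_⟩
    rw [show ((0:ℕ):ℂ) + 1/2 = 1/2 by norm_num, Complex.Gamma_one_half_eq, cpow_half_aux, Rat.cast_one, one_mul]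
  | succ m ih =>
    obtain ⟨c, hc, hval⟩ := ih
    refine ⟨(2*m+1)/2 * c, by positivity, ?_⟩
    have hne : (m:ℂ) + 1/2 ≠ 0 := by
      intro hc'
      have : (m:ℝ) + 1/2 = 0 := by
        have := congrArg Complex.re hc'
        simpa using this
      nlinarith [Nat.cast_nonneg (α := ℝ) m]
    have : ((m+1:ℕ):ℂ) + 1/2 = ((m:ℂ) + 1/2) + 1 := by push_cast; ring
    rw [this, Complex.Gamma_add_one _ hne, hval]
    push_cast
    ring

/-- Let `r ≥ 3` be an odd integer. Then `Γ_ℝ` has a simple pole at `s = 1 - r` with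
leading coefficient `ℓ`, and `Γ_ℝ(r) = q · π^{1-r} · ℓ` for some nonzero rational `q`;
i.e. the ratio of `Γ_ℝ(r)` to the leading coefficient of `Γ_ℝ` at its simple pole
`s = 1 - r` lies in `π^{1-r} · ℚ^×`. -/
theorem gammaR_value_div_leading_term_odd (r : ℤ) (hr : 3 ≤ r) (ho : Odd r) :
    ∃ ℓ : ℂ, ∃ q : ℚ, q ≠ 0 ∧
      Tendsto (fun s : ℂ => (s - ((1 : ℂ) - (r : ℂ))) * Complex.Gammaℝ s)
        (𝓝[≠] ((1 : ℂ) - (r : ℂ))) (𝓝 ℓ) ∧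
      Complex.Gammaℝ (r : ℂ) = (q : ℂ) * (Real.pi : ℂ) ^ (1 - r) * ℓ := by
  obtain ⟨k, hk⟩ := ho
  set m : ℕ := k.toNat with hm
  have hmk : (m : ℤ) = k := Int.toNat_of_nonneg (by omega)
  have hrm : r = 2 * (m : ℤ) + 1 := by omega
  have hrc : (r : ℂ) = 2 * (m : ℂ) + 1 := by exact_mod_cast congrArg (Int.cast : ℤ → ℂ) hrm
  have hpt : (1 : ℂ) - (r : ℂ) = -(2 * (m : ℂ)) := by rw [hrc]; ring
  obtain ⟨c, hc, hval⟩ := gamma_half_aux m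
  have hfacQ : (m.factorial : ℚ) ≠ 0 := Nat.cast_ne_zero.mpr m.factorial_ne_zero
  have hπ : ((π : ℝ) : ℂ) ≠ 0 := Complex.ofReal_ne_zero.mpr Real.pi_ne_zero
  refine ⟨((π:ℝ):ℂ)^m * (2 * ((-1:ℂ)^m / m.factorial)),
    c * (-1)^m * m.factorial / 2, ?_, ?_, ?_⟩
  · exact div_ne_zero
      (mul_ne_zero (mul_ne_zero hc (pow_ne_zero _ (by norm_num))) hfacQ) two_ne_zero
  · simp only [hpt, sub_neg_eq_add]
    exact gammaR_residue_aux m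
  · -- value computation
    have hsqrtne : ((Real.sqrt π : ℝ) : ℂ) ≠ 0 :=
      Complex.ofReal_ne_zero.mpr (Real.sqrt_ne_zero'.mpr Real.pi_pos)
    have hLHS : Complex.Gammaℝ (r : ℂ) = (c : ℂ) * ((π:ℝ):ℂ) ^ (-(m:ℤ)) := by
      rw [Complex.Gammaℝ_def]
      have hdiv : (r:ℂ)/2 = (m:ℂ) + 1/2 := by rw [hrc]; ring
      have hexp : -(r:ℂ)/2 = ((-(m:ℤ) : ℤ) : ℂ) + (-(1/2 : ℂ)) := by
        rw [hrc]; push_cast; ring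
      rw [hdiv, hval, hexp, Complex.cpow_add _ _ hπ, Complex.cpow_intCast,
        Complex.cpow_neg, cpow_half_aux]
      field_simp
    have h1r : (1 : ℤ) - r = -(2*(m:ℤ)) := by omega
    have hzp : ((π:ℝ):ℂ) ^ ((1:ℤ) - r) * ((π:ℝ):ℂ)^m = ((π:ℝ):ℂ) ^ (-(m:ℤ)) := by
      rw [h1r, ← zpow_natCast (((π:ℝ):ℂ)) m, ← zpow_add₀ hπ]
      congr 1
      ring
    have hsign : ((-1:ℂ)^m) * ((-1:ℂ)^m) = 1 := by
      rw [← mul_pow]; norm_num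
    have hfacC : (m.factorial : ℂ) ≠ 0 := Nat.cast_ne_zero.mpr m.factorial_ne_zero
    have hq : ((c * (-1)^m * m.factorial / 2 : ℚ) : ℂ) * (2 * ((-1:ℂ)^m / m.factorial)) = c := by
      push_cast
      rcases Nat.even_or_odd m with hme | hmo
      · rw [hme.neg_one_pow]
        field_simp
      · rw [hmo.neg_one_pow]
        field_simp
    rw [hLHS, ← hzp]
    linear_combination (-(((π:ℝ):ℂ) ^ ((1:ℤ) - r) * ((π:ℝ):ℂ)^m)) * hq
end
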